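/- arXiv:1803.01075 — 2 statements merged into one kernel-verified Lean document; each statement's English description precedes it below -/
import Mathlib

section
/- Let Q be a unital involutive quantale and X a Hilbert Q-module. If 𝒮 ⊆ X is a set of regular Hilbert sections which is join-dense in X (every element of X is a join of elements of 𝒮), then 𝒮 is a Hilbert basis of X. -/
/-- A unital involutive quantale: a complete lattice with an associative
multiplication preserving arbitrary joins in each variable, a unit `e`, and a
join-preserving involution. -/
structure QuantaleStr (Q : Type*) [CompleteLattice Q] where
  mul : Q → Q → Q
  e : Q
  star : Q → Q
  mul_assoc : ∀ a b c, mul (mul a b) c = mul a (mul b c)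
  sSup_mul : ∀ (S : Set Q) (b : Q), mul (sSup S) b = ⨆ a ∈ S, mul a b
  mul_sSup : ∀ (a : Q) (S : Set Q), mul a (sSup S) = ⨆ b ∈ S, mul a b
  e_mul : ∀ a, mul e a = a
  mul_e : ∀ a, mul a e = a
  star_star : ∀ a, star (star a) = a
  star_mul : ∀ a b, star (mul a b) = mul (star b) (star a)
  star_sSup : ∀ S : Set Q, star (sSup S) = ⨆ a ∈ S, star a

/-- The set of partial units of a quantale. -/
def QuantaleStr.PU {Q : Type*} [CompleteLattice Q] (Qs : QuantaleStr Q) : Set Q :=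
  {s | Qs.mul s (Qs.star s) ≤ Qs.e ∧ Qs.mul (Qs.star s) s ≤ Qs.e}

/-- An inverse quantal frame: a unital involutive quantale which is a frame,
has a stable support, and whose partial units join to the top. -/
structure InverseQuantalFrame (Q : Type*) [Order.Frame Q] extends QuantaleStr Q where
  supp : Q → Q
  supp_le_e : ∀ a, supp a ≤ e
  supp_sSup : ∀ S : Set Q, supp (sSup S) = ⨆ a ∈ S, supp a
  supp_le_mul_star : ∀ a, supp a ≤ mul a (star a)
  le_supp_mul : ∀ a, a ≤ mul (supp a) a
  supp_stable : ∀ b a, b ≤ e → supp (mul b a) = mul b (supp a)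
  sSup_PU : sSup {s | mul s (star s) ≤ e ∧ mul (star s) s ≤ e} = ⊤

/-- A left module over a quantale: a complete lattice with a unital associative
action preserving arbitrary joins in each variable. -/
structure QuantaleModule {Q : Type*} [CompleteLattice Q] (Qs : QuantaleStr Q)
    (X : Type*) [CompleteLattice X] where
  act : Q → X → X
  act_mul : ∀ a b x, act (Qs.mul a b) x = act a (act b x)
  act_e : ∀ x, act Qs.e x = x
  sSup_act : ∀ (S : Set Q) (x : X), act (sSup S) x = ⨆ a ∈ S, act a x
  act_sSup : ∀ (a : Q) (S : Set X), act a (sSup S) = ⨆ x ∈ S, act a x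

/-- A pre-Hilbert module over a quantale. -/
structure PreHilbertModule {Q : Type*} [CompleteLattice Q] (Qs : QuantaleStr Q)
    (X : Type*) [CompleteLattice X] extends QuantaleModule Qs X where
  inner : X → X → Q
  inner_act : ∀ a x y, inner (act a x) y = Qs.mul a (inner x y)
  sSup_inner : ∀ (S : Set X) (y : X), inner (sSup S) y = ⨆ x ∈ S, inner x y
  inner_star : ∀ x y, inner x y = Qs.star (inner y x)

namespace PreHilbertModule

variable {Q X : Type*} [CompleteLattice Q] [CompleteLattice X] {Qs : QuantaleStr Q}

/-- A Hilbert section: `⟨x,s⟩s ≤ x` for all `x`. -/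
def IsHilbertSection (H : PreHilbertModule Qs X) (s : X) : Prop :=
  ∀ x, H.act (H.inner x s) s ≤ x

/-- A regular element: `⟨s,s⟩s = s`. -/
def IsRegularSection (H : PreHilbertModule Qs X) (s : X) : Prop :=
  H.act (H.inner s s) s = s

/-- A Hilbert basis: `x = ⋁_{t ∈ S} ⟨x,t⟩t` for all `x`. -/
def IsHilbertBasis (H : PreHilbertModule Qs X) (S : Set X) : Prop :=
  ∀ x, x = ⨆ t ∈ S, H.act (H.inner x t) t

/-- Non-degeneracy of the inner product. -/
def Nondegenerate (H : PreHilbertModule Qs X) : Prop :=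
  ∀ x y, (∀ z, H.inner x z = H.inner y z) → x = y

end PreHilbertModule

/-- A `Q`-locale over an inverse quantal frame: a module which is a frame and
satisfies the anchor condition. -/
structure QLocale {Q : Type*} [Order.Frame Q] (Qf : InverseQuantalFrame Q)
    (X : Type*) [Order.Frame X] extends QuantaleModule Qf.toQuantaleStr X where
  anchor : ∀ b x, b ≤ Qf.e → act b x = act b ⊤ ⊓ x

/-- A `Q`-sheaf over an inverse quantal frame: a pre-Hilbert module which is a
frame, satisfies the anchor condition, and has a Hilbert basis. -/
structure QSheaf {Q : Type*} [Order.Frame Q] (Qf : InverseQuantalFrame Q)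
    (X : Type*) [Order.Frame X] extends PreHilbertModule Qf.toQuantaleStr X where
  anchor : ∀ b x, b ≤ Qf.e → act b x = act b ⊤ ⊓ x
  hasBasis : ∃ S : Set X, ∀ x, x = ⨆ t ∈ S, act (inner x t) t

namespace QSheaf

variable {Q X : Type*} [Order.Frame Q] [Order.Frame X] {Qf : InverseQuantalFrame Q}

/-- The support `ς_X(x) = ⟨x,x⟩ ∧ e` of a `Q`-sheaf. -/
def sppX (H : QSheaf Qf X) (x : X) : Q := H.inner x x ⊓ Qf.e

/-- A local section: `ς_X(x)s = x` for all `x ≤ s`. -/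
def IsLocalSection (H : QSheaf Qf X) (s : X) : Prop :=
  ∀ x ≤ s, H.act (H.sppX x) s = x

/-- A principal section: a local section with `⟨s,s⟩ ≤ e`. -/
def IsPrincipalSection (H : QSheaf Qf X) (s : X) : Prop :=
  H.IsLocalSection s ∧ H.inner s s ≤ Qf.e

/-- A right local section: `x = s ∧ 1_Q·x` for all `x ≤ s`. -/
def IsRightLocalSection (H : QSheaf Qf X) (s : X) : Prop :=
  ∀ x ≤ s, x = s ⊓ H.act ⊤ x

/-- A local bisection: simultaneously a local section and a right local section. -/
def IsBisection (H : QSheaf Qf X) (s : X) : Prop :=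
  H.IsLocalSection s ∧ H.IsRightLocalSection s

end QSheaf

/-- In a Hilbert `Q`-module, any join-dense set of regular Hilbert
sections is a Hilbert basis. -/
theorem stmt0 {Q X : Type*} [CompleteLattice Q] [CompleteLattice X]
    {Qs : QuantaleStr Q} (H : PreHilbertModule Qs X)
    (hnd : H.Nondegenerate)
    (S : Set X)
    (hsec : ∀ s ∈ S, H.IsHilbertSection s)
    (hreg : ∀ s ∈ S, H.IsRegularSection s)
    (hdense : ∀ x : X, ∃ T ⊆ S, x = sSup T) :
    H.IsHilbertBasis S := by
  intro x
  apply le_antisymm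
  · obtain ⟨T, hTS, hxT⟩ := hdense x
    conv_lhs => rw [hxT]
    apply sSup_le
    intro t htT
    have htS := hTS htT
    have htx : t ≤ x := by rw [hxT]; exact le_sSup htT
    -- t = ⟨t,t⟩t ≤ ⟨x,t⟩t
    have hmono : H.inner t t ≤ H.inner x t := by
      have hx2 : x = sSup {t, x} := by
        apply le_antisymm (le_sSup (by simp)) (sSup_le (by rintro y (rfl | rfl) <;> simp [htx]))
      rw [hx2, H.sSup_inner]
      exact le_biSup (fun y => H.inner y t) (show t ∈ ({t, x} : Set X) by simp)
    have hact : H.act (H.inner t t) t ≤ H.act (H.inner x t) t := by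
      have h2 : H.inner x t = sSup {H.inner t t, H.inner x t} := by
        apply le_antisymm (le_sSup (by simp)) (sSup_le (by rintro y (rfl | rfl) <;> simp [hmono]))
      rw [h2, H.sSup_act]
      exact le_biSup (fun a => H.act a t)
        (show H.inner t t ∈ ({H.inner t t, H.inner x t} : Set Q) by simp)
    calc t = H.act (H.inner t t) t := (hreg t htS).symm
      _ ≤ H.act (H.inner x t) t := hact
      _ ≤ ⨆ s ∈ S, H.act (H.inner x s) s := le_biSup (fun s => H.act (H.inner x s) s) htS
  · exact iSup₂_le fun t ht => hsec t ht x
end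

section
/- Let B be a frame and X a B-sheaf. For every B-module M and every map h : 𝒮_X → M which is B-equivariant (h(bs) = b·h(s) for all b ∈ B and s ∈ 𝒮_X; note that bs ∈ 𝒮_X) and preserves joins of compatible sets of local sections (h(⋁Z) = ⋁_{s∈Z} h(s) for every compatible Z ⊆ 𝒮_X), there exists a unique homomorphism of B-modules h♯ : X → M (a join-preserving B-equivariant map) extending h. -/
/-- Universal property of a `B`-sheaf over a frame `B`: every
`B`-equivariant map on local sections preserving joins of compatible sets
extends uniquely to a homomorphism of `B`-modules. Here `B` acts as a
commutative quantale via `⊓` with unit `⊤`. -/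
theorem stmt6 {B X M : Type*} [Order.Frame B] [Order.Frame X] [CompleteLattice M]
    -- X is a B-module:
    (act : B → X → X)
    (act_inf : ∀ a b x, act (a ⊓ b) x = act a (act b x))
    (act_top : ∀ x, act ⊤ x = x)
    (sSup_act : ∀ (S : Set B) (x : X), act (sSup S) x = ⨆ a ∈ S, act a x)
    (act_sSup : ∀ (a : B) (S : Set X), act a (sSup S) = ⨆ x ∈ S, act a x)
    -- which is a B-locale:
    (anchor : ∀ b x, act b x = act b ⊤ ⊓ x)
    -- equipped with a support:
    (σ : X → B) (σ_mono : Monotone σ)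
    (σ_act : ∀ b x, σ (act b x) = b ⊓ σ x)
    (σ_supp : ∀ x, act (σ x) x = x)
    -- and X is a B-sheaf (the local sections cover):
    (hcov : sSup {s : X | ∀ x ≤ s, act (σ x) s = x} = ⊤)
    -- M is a B-module:
    (actM : B → M → M)
    (actM_inf : ∀ a b m, actM (a ⊓ b) m = actM a (actM b m))
    (actM_top : ∀ m, actM ⊤ m = m)
    (sSup_actM : ∀ (S : Set B) (m : M), actM (sSup S) m = ⨆ a ∈ S, actM a m)
    (actM_sSup : ∀ (a : B) (S : Set M), actM a (sSup S) = ⨆ m ∈ S, actM a m)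
    -- h is a B-equivariant map on local sections preserving compatible joins:
    (h : X → M)
    (h_equiv : ∀ b s, (∀ x ≤ s, act (σ x) s = x) → h (act b s) = actM b (h s))
    (h_joins : ∀ Z : Set X, (∀ s ∈ Z, ∀ x ≤ s, act (σ x) s = x) →
        (∀ s ∈ Z, ∀ t ∈ Z, act (σ s) t = act (σ t) s) →
        h (sSup Z) = ⨆ s ∈ Z, h s) :
    ∃! H : X → M, (∀ S : Set X, H (sSup S) = ⨆ x ∈ S, H x) ∧
      (∀ b x, H (act b x) = actM b (H x)) ∧
      (∀ s, (∀ x ≤ s, act (σ x) s = x) → H s = h s) := by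
    classical
  -- basic facts about the action on X
  have act_mono : ∀ (b : B) {x y : X}, x ≤ y → act b x ≤ act b y := by
    intro b x y hxy
    rw [anchor b x, anchor b y]
    exact inf_le_inf_left _ hxy
  have act_le : ∀ (b : B) (x : X), act b x ≤ x := by
    intro b x
    rw [anchor]; exact inf_le_right
  -- basic facts about the action on M
  have actM_pair : ∀ (b : B) (m m' : M), actM b (m ⊔ m') = actM b m ⊔ actM b m' := by
    intro b m m'
    rw [← sSup_pair, actM_sSup, iSup_insert, iSup_singleton]
  have actM_mono : ∀ (b : B) {m m' : M}, m ≤ m' → actM b m ≤ actM b m' := by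
    intro b m m' hmm
    have h1 := actM_pair b m m'
    rw [sup_eq_right.mpr hmm] at h1
    rw [h1]; exact le_sup_left
  have actM_le : ∀ (b : B) (m : M), actM b m ≤ m := by
    intro b m
    have h1 : actM (b ⊔ ⊤) m = actM b m ⊔ actM ⊤ m := by
      rw [← sSup_pair, sSup_actM, iSup_insert, iSup_singleton]
    rw [sup_top_eq, actM_top] at h1
    calc actM b m ≤ actM b m ⊔ m := le_sup_left
      _ = m := h1.symm
  -- local sections are downward closed
  have LS_down : ∀ {s t : X}, (∀ y ≤ s, act (σ y) s = y) → t ≤ s →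
      (∀ y ≤ t, act (σ y) t = y) := by
    intro s t hs hts x hxt
    have h1 : act (σ x) s = x := hs x (hxt.trans hts)
    apply le_antisymm
    · calc act (σ x) t ≤ act (σ x) s := act_mono _ hts
        _ = x := h1
    · calc x = act (σ x) x := (σ_supp x).symm
        _ ≤ act (σ x) t := act_mono _ hxt
  -- every element is the join of the local sections below it
  have decomp : ∀ x : X,
      sSup {t : X | (∀ y ≤ t, act (σ y) t = y) ∧ t ≤ x} = x := by
    intro x
    apply le_antisymm (sSup_le fun t ht => ht.2)
    have h1 : x = ⨆ s ∈ {s : X | ∀ y ≤ s, act (σ y) s = y}, x ⊓ s := by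
      rw [← inf_sSup_eq, hcov, inf_top_eq]
    calc x = ⨆ s ∈ {s : X | ∀ y ≤ s, act (σ y) s = y}, x ⊓ s := h1
      _ ≤ sSup {t : X | (∀ y ≤ t, act (σ y) t = y) ∧ t ≤ x} := by
        refine iSup₂_le fun s hs => le_sSup ⟨LS_down hs inf_le_right, inf_le_left⟩
  -- elements below a common local section are compatible
  have compat : ∀ {s u v : X}, (∀ y ≤ s, act (σ y) s = y) → u ≤ s → v ≤ s →
      act (σ u) v = act (σ v) u := by
    intro s u v hs hu hv
    have h1 : act (σ v) s = v := hs v hv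
    have h2 : act (σ u) s = u := hs u hu
    calc act (σ u) v = act (σ u) (act (σ v) s) := by rw [h1]
      _ = act (σ u ⊓ σ v) s := (act_inf _ _ _).symm
      _ = act (σ v ⊓ σ u) s := by rw [inf_comm]
      _ = act (σ v) (act (σ u) s) := act_inf _ _ _
      _ = act (σ v) u := by rw [h2]
  -- the candidate extension agrees with h on local sections
  have Hloc : ∀ s : X, (∀ y ≤ s, act (σ y) s = y) →
      (⨆ t ∈ {t : X | (∀ y ≤ t, act (σ y) t = y) ∧ t ≤ s}, h t) = h s := by
    intro s hs
    apply le_antisymm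
    · refine iSup₂_le fun t ht => ?_
      obtain ⟨htl, hts⟩ := ht
      have h1 : act (σ t) s = t := hs t hts
      calc h t = h (act (σ t) s) := by rw [h1]
        _ = actM (σ t) (h s) := h_equiv _ _ hs
        _ ≤ h s := actM_le _ _
    · exact le_iSup₂_of_le s ⟨hs, le_rfl⟩ le_rfl
  -- the candidate extension preserves arbitrary joins
  have Hsup : ∀ S : Set X,
      (⨆ t ∈ {t : X | (∀ y ≤ t, act (σ y) t = y) ∧ t ≤ sSup S}, h t) =
        ⨆ x ∈ S, ⨆ t ∈ {t : X | (∀ y ≤ t, act (σ y) t = y) ∧ t ≤ x}, h t := by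
    intro S
    apply le_antisymm
    · refine iSup₂_le fun t ht => ?_
      obtain ⟨htl, hts⟩ := ht
      set Z : Set X := (fun x => t ⊓ x) '' S with hZdef
      have hZloc : ∀ z ∈ Z, ∀ y ≤ z, act (σ y) z = y := by
        rintro z ⟨x, hx, rfl⟩
        exact LS_down htl inf_le_left
      have hZcompat : ∀ u ∈ Z, ∀ v ∈ Z, act (σ u) v = act (σ v) u := by
        rintro u ⟨x, hx, rfl⟩ v ⟨x', hx', rfl⟩
        exact compat htl inf_le_left inf_le_left
      have hZsup : sSup Z = t := by
        rw [hZdef, sSup_image]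
        calc (⨆ x ∈ S, t ⊓ x) = t ⊓ sSup S := (inf_sSup_eq).symm
          _ = t := inf_eq_left.mpr hts
      have h1 : h t = ⨆ z ∈ Z, h z := by
        rw [← hZsup]; exact h_joins Z hZloc hZcompat
      rw [h1]
      refine iSup₂_le ?_
      rintro z ⟨x, hx, rfl⟩
      exact le_iSup₂_of_le x hx
        (le_iSup₂_of_le (t ⊓ x) ⟨LS_down htl inf_le_left, inf_le_right⟩ le_rfl)
    · refine iSup₂_le fun x hx => iSup₂_le fun t ht => ?_
      exact le_iSup₂_of_le t ⟨ht.1, ht.2.trans (le_sSup hx)⟩ le_rfl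
  -- the candidate extension is equivariant
  have Hequiv : ∀ (b : B) (x : X),
      (⨆ t ∈ {t : X | (∀ y ≤ t, act (σ y) t = y) ∧ t ≤ act b x}, h t) =
        actM b (⨆ t ∈ {t : X | (∀ y ≤ t, act (σ y) t = y) ∧ t ≤ x}, h t) := by
    intro b x
    have hrhs : actM b (⨆ t ∈ {t : X | (∀ y ≤ t, act (σ y) t = y) ∧ t ≤ x}, h t) =
        ⨆ t ∈ {t : X | (∀ y ≤ t, act (σ y) t = y) ∧ t ≤ x}, actM b (h t) := by
      rw [← sSup_image, actM_sSup, iSup_image]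
    rw [hrhs]
    apply le_antisymm
    · refine iSup₂_le fun t ht => ?_
      obtain ⟨htl, htx⟩ := ht
      have h1 : t ≤ x := htx.trans (act_le _ _)
      have h2 : t = act b t := by
        apply le_antisymm _ (act_le _ _)
        rw [anchor]
        refine le_inf ?_ le_rfl
        calc t ≤ act b x := htx
          _ ≤ act b ⊤ := act_mono _ le_top
      calc h t = h (act b t) := by rw [← h2]
        _ = actM b (h t) := h_equiv _ _ htl
        _ ≤ ⨆ t ∈ {t : X | (∀ y ≤ t, act (σ y) t = y) ∧ t ≤ x}, actM b (h t) :=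
            le_iSup₂_of_le t ⟨htl, h1⟩ le_rfl
    · refine iSup₂_le fun t ht => ?_
      obtain ⟨htl, htx⟩ := ht
      have h1 : actM b (h t) = h (act b t) := (h_equiv _ _ htl).symm
      rw [h1]
      exact le_iSup₂_of_le (act b t) ⟨LS_down htl (act_le _ _), act_mono _ htx⟩ le_rfl
  refine ⟨fun x => ⨆ t ∈ {t : X | (∀ y ≤ t, act (σ y) t = y) ∧ t ≤ x}, h t,
    ⟨fun S => Hsup S, fun b x => Hequiv b x, fun s hs => Hloc s hs⟩,
    fun H' hH' => ?_⟩
  obtain ⟨h'sup, h'eq, h'loc⟩ := hH'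
  funext x
  calc H' x = H' (sSup {t : X | (∀ y ≤ t, act (σ y) t = y) ∧ t ≤ x}) := by
        rw [decomp]
    _ = ⨆ t ∈ {t : X | (∀ y ≤ t, act (σ y) t = y) ∧ t ≤ x}, H' t := h'sup _
    _ = ⨆ t ∈ {t : X | (∀ y ≤ t, act (σ y) t = y) ∧ t ≤ x}, h t := by
        exact iSup_congr fun t => iSup_congr fun ht => h'loc t ht.1
end
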